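/- Under Gaussian input perturbations of variance σₒ², the risk of the dense Bayes estimator equals ∑ᵢ pᵢσ² βᵢ*ᵀΣᵢ(pᵢΣᵢ + σ²I)⁻¹βᵢ* + ∑ᵢ pᵢ²(σₒ² − σ²) βᵢ*ᵀΣᵢ(pᵢΣᵢ + σ²I)⁻²Σᵢβᵢ*, i.e., R(β̂; σₒ²) where β̂ᵢ = pᵢ(pᵢΣᵢ+σ²I)⁻¹Σᵢβᵢ* and R(β̂; σₒ²) = ∑ᵢ pᵢ(βᵢ*ᵀΣᵢβᵢ* + β̂ᵢᵀΣᵢβ̂ᵢ − 2β̂ᵢᵀΣᵢβᵢ*) + σₒ² β̂ᵀβ̂. -/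

import Mathlib

open Matrix Finset


lemma dot_mulVec_left {n : ℕ} (M : Matrix (Fin n) (Fin n) ℝ) (v w : Fin n → ℝ) :
    (M *ᵥ v) ⬝ᵥ w = v ⬝ᵥ Mᵀ *ᵥ w := by
  rw [← Matrix.transpose_transpose M, Matrix.mulVec_transpose, Matrix.transpose_transpose,
    ← Matrix.dotProduct_mulVec]

lemma block_risk {n : ℕ} (S : Matrix (Fin n) (Fin n) ℝ) (hS : S.PosSemidef)
    (β : Fin n → ℝ) (p σ2 σo2 : ℝ) (hp : 0 < p) (hσ : 0 < σ2) :
    let A := p • S + σ2 • (1 : Matrix (Fin n) (Fin n) ℝ)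
    let b := p • (A⁻¹ * S).mulVec β
    p * (β ⬝ᵥ S.mulVec β + b ⬝ᵥ S.mulVec b - 2 * (b ⬝ᵥ S.mulVec β)) + σo2 * (b ⬝ᵥ b)
    = p * σ2 * (β ⬝ᵥ (S * A⁻¹).mulVec β)
      + p ^ 2 * (σo2 - σ2) * (β ⬝ᵥ (S * A⁻¹ ^ 2 * S).mulVec β) := by
  intro A b
  have hSsymm : Sᵀ = S := (by simpa using hS.1 : S.IsSymm).eq
  have hAdef : A.PosDef := by
    refine Matrix.PosDef.of_dotProduct_mulVec_pos ?_ (fun x hx => ?_)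
    · show Aᴴ = A
      simp [A, Matrix.conjTranspose_add, Matrix.conjTranspose_smul, hSsymm]
    · have h1 : 0 ≤ star x ⬝ᵥ S.mulVec x := hS.dotProduct_mulVec_nonneg x
      have h2 : (0:ℝ) < star x ⬝ᵥ x := by
        simpa using dotProduct_star_self_pos_iff.mpr hx
      have : star x ⬝ᵥ A.mulVec x
          = p * (star x ⬝ᵥ S.mulVec x) + σ2 * (star x ⬝ᵥ x) := by
        simp [A, Matrix.add_mulVec, Matrix.smul_mulVec, dotProduct_add,
          dotProduct_smul, smul_eq_mul]
      rw [this]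
      positivity
  have hAunit : IsUnit A.det := (Matrix.isUnit_iff_isUnit_det A).mp hAdef.isUnit
  have hAinv' : A⁻¹ * A = 1 := Matrix.nonsing_inv_mul A hAunit
  have hAsymm : Aᵀ = A := (by simpa using hAdef.1 : A.IsSymm).eq
  have hAisymm : (A⁻¹)ᵀ = A⁻¹ := by rw [Matrix.transpose_nonsing_inv, hAsymm]
  have key : p • (S * A⁻¹ * S) + σ2 • (S * A⁻¹) = S := by
    calc p • (S * A⁻¹ * S) + σ2 • (S * A⁻¹) = S * A⁻¹ * A := by
          simp [A, Matrix.mul_add, Matrix.mul_smul, mul_one]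
      _ = S := by rw [Matrix.mul_assoc, hAinv', Matrix.mul_one]
  have key2 : p • (S * A⁻¹ * S * (A⁻¹ * S)) + σ2 • (S * A⁻¹ * (A⁻¹ * S))
      = S * A⁻¹ * S := by
    have := congrArg (fun M => M * (A⁻¹ * S)) key
    simpa [Matrix.add_mul, Matrix.smul_mul, Matrix.mul_assoc] using this
  set x := β ⬝ᵥ S.mulVec β with hx
  set u := β ⬝ᵥ (S * A⁻¹).mulVec β with hu
  set y := β ⬝ᵥ (S * A⁻¹ * S).mulVec β with hy
  set z := β ⬝ᵥ (S * A⁻¹ * S * (A⁻¹ * S)).mulVec β with hz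
  set w := β ⬝ᵥ (S * A⁻¹ * (A⁻¹ * S)).mulVec β with hw
  have rel1 : p * y + σ2 * u = x := by
    have := congrArg (fun M => β ⬝ᵥ M.mulVec β) key
    simpa [Matrix.add_mulVec, Matrix.smul_mulVec, dotProduct_add,
      dotProduct_smul, smul_eq_mul, hx, hu, hy] using this
  have rel2 : p * z + σ2 * w = y := by
    have := congrArg (fun M => β ⬝ᵥ M.mulVec β) key2
    simpa [Matrix.add_mulVec, Matrix.smul_mulVec, dotProduct_add,
      dotProduct_smul, smul_eq_mul, hy, hz, hw] using this
  have hMT : (A⁻¹ * S)ᵀ = S * A⁻¹ := by rw [Matrix.transpose_mul, hAisymm, hSsymm]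
  have hbS : b ⬝ᵥ S.mulVec β = p * y := by
    have h : ((A⁻¹ * S) *ᵥ β) ⬝ᵥ S *ᵥ β = y := by
      rw [dot_mulVec_left, hMT, Matrix.mulVec_mulVec, hy, Matrix.mul_assoc]
    simp [b, smul_dotProduct, smul_eq_mul, h]
  have hbSb : b ⬝ᵥ S.mulVec b = p ^ 2 * z := by
    have h : ((A⁻¹ * S) *ᵥ β) ⬝ᵥ S *ᵥ ((A⁻¹ * S) *ᵥ β) = z := by
      rw [dot_mulVec_left, hMT, Matrix.mulVec_mulVec, Matrix.mulVec_mulVec, hz]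
    simp only [b, Matrix.mulVec_smul, smul_dotProduct, dotProduct_smul, smul_eq_mul, h]
    ring
  have hbb : b ⬝ᵥ b = p ^ 2 * w := by
    have h : ((A⁻¹ * S) *ᵥ β) ⬝ᵥ ((A⁻¹ * S) *ᵥ β) = w := by
      rw [dot_mulVec_left, hMT, Matrix.mulVec_mulVec, hw, Matrix.mul_assoc]
    simp only [b, smul_dotProduct, dotProduct_smul, smul_eq_mul, h]
    ring
  have hSA2 : β ⬝ᵥ (S * A⁻¹ ^ 2 * S).mulVec β = w := by
    rw [hw, sq, Matrix.mul_assoc, Matrix.mul_assoc, Matrix.mul_assoc]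
  rw [hbS, hbSb, hbb, hSA2]
  linear_combination (-p) * rel1 + p ^ 2 * rel2


/-- Under Gaussian input perturbations of variance `σₒ²`, the risk of the dense Bayes
estimator (whose blocks are `β̂ᵢ = pᵢ(pᵢΣᵢ+σ²I)⁻¹Σᵢβᵢ*`) equals
`∑ᵢ pᵢσ² βᵢ*ᵀΣᵢ(pᵢΣᵢ + σ²I)⁻¹βᵢ* + ∑ᵢ pᵢ²(σₒ² − σ²) βᵢ*ᵀΣᵢ(pᵢΣᵢ + σ²I)⁻²Σᵢβᵢ*`, where
`R(β̂; σₒ²) = ∑ᵢ pᵢ(βᵢ*ᵀΣᵢβᵢ* + β̂ᵢᵀΣᵢβ̂ᵢ − 2β̂ᵢᵀΣᵢβᵢ*) + σₒ² β̂ᵀβ̂`. -/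
theorem dense_robustness_risk {k : ℕ} (d : Fin k → ℕ)
    (S : (i : Fin k) → Matrix (Fin (d i)) (Fin (d i)) ℝ)
    (hS : ∀ i, (S i).PosSemidef)
    (β : (i : Fin k) → (Fin (d i) → ℝ))
    (p : Fin k → ℝ) (hp0 : ∀ i, 0 < p i) (hp1 : ∀ i, p i ≤ 1)
    (σ2 σo2 : ℝ) (hσ : 0 < σ2) (hσo : 0 < σo2)
    (bopt : (i : Fin k) → (Fin (d i) → ℝ))
    (hbopt : ∀ i, bopt i =
        p i • ((p i • S i + σ2 • (1 : Matrix (Fin (d i)) (Fin (d i)) ℝ))⁻¹ * S i).mulVec (β i)) :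
    (∑ i, p i * (β i ⬝ᵥ (S i).mulVec (β i)
        + bopt i ⬝ᵥ (S i).mulVec (bopt i) - 2 * (bopt i ⬝ᵥ (S i).mulVec (β i))))
      + σo2 * ∑ i, bopt i ⬝ᵥ bopt i
    = (∑ i, p i * σ2 *
          (β i ⬝ᵥ (S i * (p i • S i + σ2 • (1 : Matrix (Fin (d i)) (Fin (d i)) ℝ))⁻¹).mulVec (β i)))
      + ∑ i, (p i) ^ 2 * (σo2 - σ2) *
          (β i ⬝ᵥ (S i * ((p i • S i + σ2 • (1 : Matrix (Fin (d i)) (Fin (d i)) ℝ))⁻¹) ^ 2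
            * S i).mulVec (β i)) := by
  rw [Finset.mul_sum, ← Finset.sum_add_distrib, ← Finset.sum_add_distrib]
  refine Finset.sum_congr rfl fun i _ => ?_
  have h := block_risk (S i) (hS i) (β i) (p i) σ2 σo2 (hp0 i) hσ
  simp only at h
  rw [hbopt i]
  exact h
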